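/- Let Δt, α, β_el, β_ee > 0, set a = Δt/α², b = Δt/α, D = 1 + a β_el + b β_ee, r = (1 + a β_el + b(β_ee − 1))/D, and ρ = (1 + a(β_el − 2π) + b(β_ee − 1))/D. Let M, M_el : ℝ² → ℝ be continuous radial functions (depending on k only through |k|), and let (fⁿ)_{n≥0} be a sequence of continuous functions ℝ² → ℝ satisfying, for every n ≥ 0 and k ∈ ℝ², the IMEX penalized scheme (f^{n+1}(k) − fⁿ(k))/Δt = [Q_el(fⁿ)(k) − β_el(M_el(k) − fⁿ(k))]/α² + β_el(M_el(k) − f^{n+1}(k))/α² + (1−β_ee)(M(k) − fⁿ(k))/α + β_ee(M(k) − f^{n+1}(k))/α (i.e., the electron–electron operator is replaced by the BGK operator M − f). Then for every n ≥ 0: (i) fⁿ − ρⁿ f⁰ is a radial function, hence Q_el(fⁿ) = ρⁿ Q_el(f⁰); and (ii) fⁿ − M = rⁿ (f⁰ − M) + (a/D) Σ_{j=0}^{n−1} r^{n−1−j} ρ^j Q_el(f⁰), pointwise on ℝ². -/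

import Mathlib

open MeasureTheory Real

noncomputable section

/-- The point on the unit circle `S¹ ⊂ ℝ²` at angle `θ`. -/
def circ (θ : ℝ) : EuclideanSpace ℝ (Fin 2) :=
  (WithLp.equiv 2 (Fin 2 → ℝ)).symm ![Real.cos θ, Real.sin θ]

/-- Integral over the unit circle `S¹ ⊂ ℝ²` with respect to arclength measure,
parametrized by the angle. -/
def sphereIntegral (g : EuclideanSpace ℝ (Fin 2) → ℝ) : ℝ :=
  ∫ θ in (0:ℝ)..(2 * Real.pi), g (circ θ)

/-- The elastic collision operator (parabolic band, unit scattering matrix):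
`Q_el(f)(k) = ∫_{S¹} f(|k| σ) dσ − 2π f(k)`. -/
def Qel (f : EuclideanSpace ℝ (Fin 2) → ℝ) (k : EuclideanSpace ℝ (Fin 2)) : ℝ :=
  sphereIntegral (fun σ => f (‖k‖ • σ)) - 2 * Real.pi * f k

/-- A function on `ℝ²` is radial if it depends on `k` only through `|k|`. -/
def Radial (g : EuclideanSpace ℝ (Fin 2) → ℝ) : Prop :=
  ∀ k k' : EuclideanSpace ℝ (Fin 2), ‖k‖ = ‖k'‖ → g k = g k'

lemma circ_norm (θ : ℝ) : ‖circ θ‖ = 1 := by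
  rw [EuclideanSpace.norm_eq]
  simp only [circ, WithLp.equiv_symm_apply, PiLp.toLp_apply, Fin.sum_univ_two,
    Matrix.cons_val_zero, Matrix.cons_val_one, Matrix.head_cons, norm_eq_abs, sq_abs]
  rw [← Real.sqrt_one]
  congr 1
  rw [← sin_sq_add_cos_sq θ]
  ring

lemma circ_cont : Continuous circ := by
  have h1 : Continuous fun θ : ℝ => (![cos θ, sin θ] : Fin 2 → ℝ) := by
    apply continuous_pi
    intro i
    fin_cases i <;> simp <;> fun_prop
  have h2 : Continuous ((WithLp.equiv 2 (Fin 2 → ℝ)).symm :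
      (Fin 2 → ℝ) → EuclideanSpace ℝ (Fin 2)) :=
    PiLp.continuous_toLp 2 (fun _ : Fin 2 => ℝ)
  exact h2.comp h1

lemma norm_smul_circ (k : EuclideanSpace ℝ (Fin 2)) (θ : ℝ) : ‖‖k‖ • circ θ‖ = ‖k‖ := by
  rw [norm_smul, circ_norm, mul_one, norm_norm]

lemma Qel_smul_circ (g : EuclideanSpace ℝ (Fin 2) → ℝ) (k : EuclideanSpace ℝ (Fin 2)) (θ : ℝ) :
    Qel g (‖k‖ • circ θ) =
      sphereIntegral (fun σ => g (‖k‖ • σ)) - 2 * Real.pi * g (‖k‖ • circ θ) := by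
  simp only [Qel, norm_smul_circ]

lemma intInt (g : EuclideanSpace ℝ (Fin 2) → ℝ) (hg : Continuous g)
    (k : EuclideanSpace ℝ (Fin 2)) :
    IntervalIntegrable (fun θ => g (‖k‖ • circ θ)) volume 0 (2 * Real.pi) :=
  ((hg.comp (circ_cont.const_smul ‖k‖)).intervalIntegrable _ _)

/-- Asymptotic behavior of the IMEX penalized scheme for
`∂ₜ f = Q_el(f)/α² + (M − f)/α`: the non-radial part of `fⁿ` decays geometrically
with ratio `ρ`, and `fⁿ − M` satisfies a discrete Duhamel formula. -/
theorem stmt_19 (Δt α βel βee : ℝ)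
    (hΔt : 0 < Δt) (hα : 0 < α) (hβel : 0 < βel) (hβee : 0 < βee)
    (a b D r ρ : ℝ)
    (ha : a = Δt / α ^ 2) (hb : b = Δt / α)
    (hD : D = 1 + a * βel + b * βee)
    (hr : r = (1 + a * βel + b * (βee - 1)) / D)
    (hρ : ρ = (1 + a * (βel - 2 * Real.pi) + b * (βee - 1)) / D)
    (M Mel : EuclideanSpace ℝ (Fin 2) → ℝ)
    (hM : Continuous M) (hMrad : Radial M)
    (hMel : Continuous Mel) (hMelrad : Radial Mel)
    (f : ℕ → EuclideanSpace ℝ (Fin 2) → ℝ)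
    (hf : ∀ n, Continuous (f n))
    (hscheme : ∀ (n : ℕ) (k : EuclideanSpace ℝ (Fin 2)),
      (f (n+1) k - f n k) / Δt =
        (Qel (f n) k - βel * (Mel k - f n k)) / α ^ 2
          + βel * (Mel k - f (n+1) k) / α ^ 2
          + (1 - βee) * (M k - f n k) / α
          + βee * (M k - f (n+1) k) / α) :
    ∀ n : ℕ,
      Radial (fun k => f n k - ρ ^ n * f 0 k) ∧
      (∀ k, Qel (f n) k = ρ ^ n * Qel (f 0) k) ∧
      (∀ k, f n k - M k =
        r ^ n * (f 0 k - M k)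
          + (a / D) * (∑ j ∈ Finset.range n, r ^ (n - 1 - j) * ρ ^ j) * Qel (f 0) k) := by
  have hα0 : α ≠ 0 := ne_of_gt hα
  have hΔ0 : Δt ≠ 0 := ne_of_gt hΔt
  have hapos : 0 < a := by rw [ha]; positivity
  have hbpos : 0 < b := by rw [hb]; positivity
  have hDpos : 0 < D := by rw [hD]; positivity
  have hD0 : D ≠ 0 := ne_of_gt hDpos
  have hrD : r * D = 1 + a * βel + b * (βee - 1) := by rw [hr]; field_simp
  have hρD : ρ * D = 1 + a * (βel - 2 * Real.pi) + b * (βee - 1) := by rw [hρ]; field_simp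
  have hρr : ρ = r - 2 * Real.pi * (a / D) := by
    field_simp
    linear_combination hρD - hrD
  have hbD : b / D = 1 - r := by
    field_simp
    linear_combination hrD - hD
  -- explicit recursion
  have hrec : ∀ (n : ℕ) (k : EuclideanSpace ℝ (Fin 2)),
      f (n+1) k = r * f n k + (a / D) * Qel (f n) k + (b / D) * M k := by
    intro n k
    have h := hscheme n k
    have h' : f (n+1) k - f n k =
        a * (Qel (f n) k - βel * (Mel k - f n k)) + a * (βel * (Mel k - f (n+1) k))
          + b * ((1 - βee) * (M k - f n k)) + b * (βee * (M k - f (n+1) k)) := by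
      rw [ha, hb]
      field_simp at h ⊢
      linear_combination h
    field_simp
    linear_combination h' + f (n+1) k * hD - f n k * hrD
  intro n
  induction n with
  | zero =>
    refine ⟨?_, ?_, ?_⟩
    · intro k k' _; simp
    · intro k; simp
    · intro k; simp
  | succ n ih =>
    obtain ⟨ih1, ih2, ih3⟩ := ih
    -- difference identity (for radiality)
    have hdiff : ∀ k k' : EuclideanSpace ℝ (Fin 2), ‖k‖ = ‖k'‖ →
        f (n+1) k - f (n+1) k' = ρ ^ (n+1) * (f 0 k - f 0 k') := by
      intro k k' hkk'
      have e1 : f n k - f n k' = ρ ^ n * (f 0 k - f 0 k') := by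
        have := ih1 k k' hkk'
        simp only at this
        linear_combination this
      have hQ0d : Qel (f 0) k - Qel (f 0) k' = -(2 * Real.pi) * (f 0 k - f 0 k') := by
        simp only [Qel]
        rw [hkk']
        ring
      have h2 : Qel (f n) k - Qel (f n) k' = ρ ^ n * (-(2 * Real.pi) * (f 0 k - f 0 k')) := by
        rw [ih2 k, ih2 k']
        linear_combination ρ ^ n * hQ0d
      have hM' : M k = M k' := hMrad k k' hkk'
      rw [hrec n k, hrec n k']
      rw [pow_succ]
      linear_combination r * e1 + (a / D) * h2 + (b / D) * hM'
        - ρ ^ n * (f 0 k - f 0 k') * hρr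
    refine ⟨?_, ?_, ?_⟩
    · intro k k' hkk'
      simp only
      linear_combination hdiff k k' hkk'
    · -- Qel identity
      intro k
      have hS0 : (∫ θ in (0:ℝ)..(2 * Real.pi), f 0 (‖k‖ • circ θ))
          = sphereIntegral (fun σ => f 0 (‖k‖ • σ)) := rfl
      have hSn : (∫ θ in (0:ℝ)..(2 * Real.pi), f n (‖k‖ • circ θ))
          = sphereIntegral (fun σ => f n (‖k‖ • σ)) := rfl
      have hptw : ∀ θ : ℝ, f (n+1) (‖k‖ • circ θ)
          = r * f n (‖k‖ • circ θ)
            + ((a / D) * ρ ^ n) * (sphereIntegral (fun σ => f 0 (‖k‖ • σ))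
                - 2 * Real.pi * f 0 (‖k‖ • circ θ))
            + ((b / D) * M k) := by
        intro θ
        rw [hrec n (‖k‖ • circ θ), ih2 (‖k‖ • circ θ), Qel_smul_circ,
          hMrad (‖k‖ • circ θ) k (norm_smul_circ k θ)]
        ring
      have IntA : IntervalIntegrable (fun θ => r * f n (‖k‖ • circ θ)) volume 0 (2 * Real.pi) :=
        (intInt (f n) (hf n) k).const_mul r
      have IntB : IntervalIntegrable (fun θ =>
          ((a / D) * ρ ^ n) * (sphereIntegral (fun σ => f 0 (‖k‖ • σ))
            - 2 * Real.pi * f 0 (‖k‖ • circ θ))) volume 0 (2 * Real.pi) :=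
        ((intervalIntegrable_const).sub ((intInt (f 0) (hf 0) k).const_mul
          (2 * Real.pi))).const_mul _
      have IntC : IntervalIntegrable (fun _ : ℝ => (b / D) * M k) volume 0 (2 * Real.pi) :=
        intervalIntegrable_const
      have hSn1 : sphereIntegral (fun σ => f (n+1) (‖k‖ • σ))
          = r * sphereIntegral (fun σ => f n (‖k‖ • σ))
            + (2 * Real.pi) * ((b / D) * M k) := by
        show (∫ θ in (0:ℝ)..(2 * Real.pi), f (n+1) (‖k‖ • circ θ)) = _
        rw [intervalIntegral.integral_congr (g := fun θ =>
          r * f n (‖k‖ • circ θ)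
            + ((a / D) * ρ ^ n) * (sphereIntegral (fun σ => f 0 (‖k‖ • σ))
                - 2 * Real.pi * f 0 (‖k‖ • circ θ))
            + ((b / D) * M k)) (fun θ _ => hptw θ)]
        rw [intervalIntegral.integral_add (IntA.add IntB) IntC,
          intervalIntegral.integral_add IntA IntB,
          intervalIntegral.integral_const,
          intervalIntegral.integral_const_mul,
          intervalIntegral.integral_const_mul,
          intervalIntegral.integral_sub intervalIntegrable_const
            ((intInt (f 0) (hf 0) k).const_mul (2 * Real.pi)),
          intervalIntegral.integral_const,
          intervalIntegral.integral_const_mul, hSn, hS0]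
        simp only [smul_eq_mul]
        ring
      have ih2k : sphereIntegral (fun σ => f n (‖k‖ • σ)) - 2 * Real.pi * f n k
          = ρ ^ n * (sphereIntegral (fun σ => f 0 (‖k‖ • σ)) - 2 * Real.pi * f 0 k) := ih2 k
      show sphereIntegral (fun σ => f (n+1) (‖k‖ • σ)) - 2 * Real.pi * f (n+1) k
          = ρ ^ (n+1) * Qel (f 0) k
      rw [hSn1, hrec n k, ih2 k, pow_succ]
      simp only [Qel]
      linear_combination r * ih2k
        - ρ ^ n * (sphereIntegral (fun σ => f 0 (‖k‖ • σ)) - 2 * Real.pi * f 0 k) * hρr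
    · -- Duhamel formula
      intro k
      have h3 := ih3 k
      have hsum : (∑ j ∈ Finset.range (n+1), r ^ (n + 1 - 1 - j) * ρ ^ j)
          = r * (∑ j ∈ Finset.range n, r ^ (n - 1 - j) * ρ ^ j) + ρ ^ n := by
        rw [Finset.sum_range_succ, Finset.mul_sum]
        congr 1
        · apply Finset.sum_congr rfl
          intro j hj
          have hj' : j < n := Finset.mem_range.mp hj
          have he : n + 1 - 1 - j = (n - 1 - j) + 1 := by omega
          rw [he, pow_succ]
          ring
        · have : n + 1 - 1 - n = 0 := by omega
          rw [this, pow_zero, one_mul]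
      rw [hsum, hrec n k, pow_succ]
      linear_combination r * h3 + (a / D) * (ih2 k) + M k * hbD
  
end
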